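/- There exist dyadic grids D^(1), …, D^(3ⁿ) in ℝⁿ such that for every cube Q ⊆ ℝⁿ with sides parallel to the coordinate axes there exist an index i ∈ {1, …, 3ⁿ} and a cube Q₀ ∈ D^(i) with Q ⊆ Q₀ and ℓ(Q₀) ≤ 3 ℓ(Q), where ℓ denotes side length. -/

import Mathlib

open MeasureTheory Filter ENNReal

noncomputable section

/-- The half-open axis-parallel cube with lower corner `c` and side length `h`. -/
def cube {n : ℕ} (c : Fin n → ℝ) (h : ℝ) : Set (Fin n → ℝ) :=
  Set.univ.pi fun i => Set.Ico (c i) (c i + h)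

/-- The average of `g` over the set `Q`. -/
def avg {n : ℕ} (Q : Set (Fin n → ℝ)) (g : (Fin n → ℝ) → ℝ) : ℝ :=
  (volume Q).toReal⁻¹ * ∫ y in Q, g y

/-- `w` is an `A₁` Muckenhoupt weight: a locally integrable, a.e. positive function whose
average over every axis-parallel cube is controlled by its essential infimum there. -/
def IsA1 {n : ℕ} (w : (Fin n → ℝ) → ℝ) : Prop :=
  LocallyIntegrable w volume ∧ (∀ᵐ x ∂(volume : Measure (Fin n → ℝ)), 0 < w x) ∧
    ∃ C > 0, ∀ (c : Fin n → ℝ) (h : ℝ), 0 < h →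
      avg (cube c h) w ≤ C * essInf w (volume.restrict (cube c h))

/-- The `A₁` constant `[w]_{A₁}` of a weight. -/
def A1const {n : ℕ} (w : (Fin n → ℝ) → ℝ) : ℝ :=
  sInf {C : ℝ | 0 < C ∧ ∀ (c : Fin n → ℝ) (h : ℝ), 0 < h →
    avg (cube c h) w ≤ C * essInf w (volume.restrict (cube c h))}

/-- The function `Φ(t) = t^r (1 + log⁺ t)^δ`. -/
def phi (r δ t : ℝ) : ℝ := t ^ r * (1 + max 0 (Real.log t)) ^ δ

/-- `b_k = 1 / Φ(a^{-k})`. -/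
def bk (r δ a : ℝ) (k : ℤ) : ℝ := 1 / phi r δ (a ^ (-k))

/-- `Φ` is a Young function: convex, increasing, vanishing at `0`, tending to `∞`. -/
def IsYoung (Φ : ℝ → ℝ) : Prop :=
  ConvexOn ℝ (Set.Ici 0) Φ ∧ MonotoneOn Φ (Set.Ici 0) ∧ Φ 0 = 0 ∧
    Tendsto Φ atTop atTop

/-- The Luxemburg average `‖f‖_{Φ,Q}` (with value `∞` if no admissible `λ` exists). -/
def eLuxNorm {n : ℕ} (Φ : ℝ → ℝ) (f : (Fin n → ℝ) → ℝ) (Q : Set (Fin n → ℝ)) : ℝ≥0∞ :=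
  sInf (ENNReal.ofReal '' {l : ℝ | 0 < l ∧
    ∫⁻ y in Q, ENNReal.ofReal (Φ (|f y| / l)) ≤ volume Q})

/-- The Orlicz maximal operator `M_Φ`, a supremum over all cubes containing `x`. -/
def maxOrlicz {n : ℕ} (Φ : ℝ → ℝ) (f : (Fin n → ℝ) → ℝ) (x : Fin n → ℝ) : ℝ≥0∞ :=
  sSup {r : ℝ≥0∞ | ∃ (c : Fin n → ℝ) (h : ℝ), 0 < h ∧ x ∈ cube c h ∧
    r = eLuxNorm Φ f (cube c h)}

/-- The Hardy–Littlewood maximal operator over axis-parallel cubes. -/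
def maxHL {n : ℕ} (f : (Fin n → ℝ) → ℝ) (x : Fin n → ℝ) : ℝ≥0∞ :=
  sSup {r : ℝ≥0∞ | ∃ (c : Fin n → ℝ) (h : ℝ), 0 < h ∧ x ∈ cube c h ∧
    r = ENNReal.ofReal (avg (cube c h) fun y => |f y|)}

/-- `M_r f = M(|f|^r)^{1/r}`. -/
def maxR {n : ℕ} (r : ℝ) (f : (Fin n → ℝ) → ℝ) (x : Fin n → ℝ) : ℝ≥0∞ :=
  maxHL (fun y => |f y| ^ r) x ^ (1 / r)

/-- A dyadic grid: its cubes are recorded as pairs (lower corner `c`, scale `k`), the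
corresponding cube being `cube c (2^k)`.  Any two cubes of the grid are nested or
disjoint, and for each scale `k` the cubes of that scale partition `ℝⁿ`. -/
structure DyadicGrid (n : ℕ) where
  cubes : Set ((Fin n → ℝ) × ℤ)
  nested : ∀ p ∈ cubes, ∀ q ∈ cubes,
    (cube p.1 ((2:ℝ) ^ p.2) ∩ cube q.1 ((2:ℝ) ^ q.2)).Nonempty →
      cube p.1 ((2:ℝ) ^ p.2) ⊆ cube q.1 ((2:ℝ) ^ q.2) ∨
        cube q.1 ((2:ℝ) ^ q.2) ⊆ cube p.1 ((2:ℝ) ^ p.2)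
  partition : ∀ (k : ℤ) (x : Fin n → ℝ), ∃! c : Fin n → ℝ,
    (c, k) ∈ cubes ∧ x ∈ cube c ((2:ℝ) ^ k)

/-- The dyadic Orlicz maximal operator `M_{Φ,D}`. -/
def maxOrliczD {n : ℕ} (D : DyadicGrid n) (Φ : ℝ → ℝ) (f : (Fin n → ℝ) → ℝ)
    (x : Fin n → ℝ) : ℝ≥0∞ :=
  sSup {r : ℝ≥0∞ | ∃ p ∈ D.cubes, x ∈ cube p.1 ((2:ℝ) ^ p.2) ∧
    r = eLuxNorm Φ f (cube p.1 ((2:ℝ) ^ p.2))}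

/-- The dyadic Hardy–Littlewood maximal operator `M_D`. -/
def maxD {n : ℕ} (D : DyadicGrid n) (v : (Fin n → ℝ) → ℝ) (x : Fin n → ℝ) : ℝ≥0∞ :=
  sSup {r : ℝ≥0∞ | ∃ p ∈ D.cubes, x ∈ cube p.1 ((2:ℝ) ^ p.2) ∧
    r = ENNReal.ofReal (avg (cube p.1 ((2:ℝ) ^ p.2)) v)}

/-- `w ∈ A_q`, `1 < q < ∞`. -/
def IsAq {n : ℕ} (w : (Fin n → ℝ) → ℝ) (q : ℝ) : Prop :=
  LocallyIntegrable w volume ∧ (∀ᵐ x ∂(volume : Measure (Fin n → ℝ)), 0 < w x) ∧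
    ∃ C > 0, ∀ (c : Fin n → ℝ) (h : ℝ), 0 < h →
      avg (cube c h) w * avg (cube c h) (fun x => w x ^ (1 - q / (q - 1))) ^ (q - 1) ≤ C


namespace OneThird

lemma three_dvd (d : ℕ) : (3:ℤ) ∣ ((-2)^d - 1) := by
  have h : ((-2:ℤ))^d ≡ 1^d [ZMOD 3] := Int.ModEq.pow d (by decide)
  simpa using (Int.ModEq.dvd h.symm)

lemma neg_one_zpow_eq (k : ℤ) : ∃ e : ℤ, ((-1:ℝ))^k = (e:ℝ) ∧ e * e = 1 := by
  rcases Int.even_or_odd k with hk | hk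
  · exact ⟨1, by simp [hk.neg_one_zpow], by ring⟩
  · exact ⟨-1, by simp [hk.neg_one_zpow], by ring⟩

lemma corner_diff {k l : ℤ} (hkl : k ≤ l) (r m M : ℤ) :
    ∃ j : ℤ, (2:ℝ)^k * (m + (-1:ℝ)^k * r / 3) - (2:ℝ)^l * (M + (-1:ℝ)^l * r / 3)
      = (2:ℝ)^k * j := by
  set d : ℕ := (l - k).toNat with hd
  have hl : l = k + (d:ℤ) := by omega
  obtain ⟨u, hu⟩ := three_dvd d
  obtain ⟨e, he, -⟩ := neg_one_zpow_eq k
  refine ⟨m - 2^d * M - e * r * u, ?_⟩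
  have h2 : (2:ℝ)^l = (2:ℝ)^k * (2:ℝ)^d := by
    rw [hl, zpow_add₀ (by norm_num : (2:ℝ) ≠ 0), zpow_natCast]
  have hneg : (-1:ℝ)^l = (e:ℝ) * (-1:ℝ)^d := by
    rw [hl, zpow_add₀ (by norm_num : (-1:ℝ) ≠ 0), zpow_natCast, he]
  have hu2 : (2:ℝ)^d * (-1:ℝ)^d = 1 + 3*(u:ℝ) := by
    have h' : ((-2:ℤ))^d = 1 + 3*u := by linarith [hu]
    have hcast : ((-2:ℝ))^d = 1 + 3*(u:ℝ) := by exact_mod_cast congrArg (Int.cast : ℤ → ℝ) h'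
    rw [← hcast, show (-2:ℝ) = (-1)*2 by norm_num, mul_pow]; ring
  rw [h2, hneg, he]
  push_cast
  linear_combination (-(2:ℝ)^k * (e:ℝ) * (r:ℝ) / 3) * hu2

lemma cube_subset {n : ℕ} {c c' : Fin n → ℝ} {h h' : ℝ}
    (H : ∀ i, c' i ≤ c i ∧ c i + h ≤ c' i + h') : cube c h ⊆ cube c' h' :=
  Set.pi_mono fun i _ => Set.Ico_subset_Ico (H i).1 (H i).2

lemma mem_cube {n : ℕ} {c x : Fin n → ℝ} {h : ℝ} :
    x ∈ cube c h ↔ ∀ i, c i ≤ x i ∧ x i < c i + h := by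
  simp [cube, Set.mem_pi, Set.mem_Ico]

lemma subset_of_le {n : ℕ} (v : Fin n → Fin 3) {c c' : Fin n → ℝ} {k l : ℤ} (hkl : k ≤ l)
    (hc : ∀ i, ∃ m : ℤ, c i = (2:ℝ)^k * (m + (-1:ℝ)^k * ((v i : ℕ):ℝ) / 3))
    (hc' : ∀ i, ∃ M : ℤ, c' i = (2:ℝ)^l * (M + (-1:ℝ)^l * ((v i : ℕ):ℝ) / 3))
    (hne : (cube c ((2:ℝ)^k) ∩ cube c' ((2:ℝ)^l)).Nonempty) :
    cube c ((2:ℝ)^k) ⊆ cube c' ((2:ℝ)^l) := by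
  obtain ⟨x, hx1, hx2⟩ := hne
  rw [mem_cube] at hx1 hx2
  set s := (2:ℝ)^k with hs_def
  set S := (2:ℝ)^l with hS_def
  have hs : 0 < s := zpow_pos (by norm_num) k
  set d : ℕ := (l - k).toNat with hd
  have hSs : S = s * 2^d := by
    rw [hS_def, hs_def, show l = k + (d:ℤ) by omega,
      zpow_add₀ (by norm_num : (2:ℝ) ≠ 0), zpow_natCast]
  apply cube_subset
  intro i
  obtain ⟨m, hm⟩ := hc i
  obtain ⟨M, hM⟩ := hc' i
  obtain ⟨j, hj⟩ : ∃ j : ℤ, c i - c' i = s * j := by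
    rw [hm, hM]; exact corner_diff hkl _ m M
  have h1 : c' i < c i + s := lt_of_le_of_lt (hx2 i).1 (hx1 i).2
  have h2 : c i < c' i + S := lt_of_le_of_lt (hx1 i).1 (hx2 i).2
  have hj0 : 0 ≤ j := by
    by_contra hneg
    push_neg at hneg
    have : (j:ℝ) ≤ -1 := by exact_mod_cast Int.le_sub_one_of_lt hneg
    nlinarith
  have hjd : j + 1 ≤ 2^d := by
    have hjr : (j:ℝ) < 2^d := by nlinarith
    have : j < 2^d := by exact_mod_cast hjr
    omega
  have hjd' : (j:ℝ) + 1 ≤ 2^d := by exact_mod_cast hjd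
  constructor
  · nlinarith [(by exact_mod_cast hj0 : (0:ℝ) ≤ (j:ℝ))]
  · nlinarith

def grid (n : ℕ) (v : Fin n → Fin 3) : DyadicGrid n where
  cubes := {p | ∀ i, ∃ m : ℤ, p.1 i = (2:ℝ)^p.2 * (m + (-1:ℝ)^p.2 * ((v i : ℕ):ℝ) / 3)}
  nested := by
    rintro p hp q hq hne
    rcases le_total p.2 q.2 with hkl | hkl
    · exact Or.inl (subset_of_le v hkl hp hq hne)
    · exact Or.inr (subset_of_le v hkl hq hp (by rwa [Set.inter_comm] at hne))
  partition := by
    intro k x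
    set s := (2:ℝ)^k with hs_def
    have hs : 0 < s := zpow_pos (by norm_num) k
    set t : Fin n → ℝ := fun i => (-1:ℝ)^k * ((v i : ℕ):ℝ) / 3 with ht
    refine ⟨fun i => s * (⌊x i / s - t i⌋ + t i), ⟨fun i => ⟨⌊x i / s - t i⌋, rfl⟩, ?_⟩, ?_⟩
    · rw [mem_cube]
      intro i
      constructor
      · have := Int.floor_le (x i / s - t i)
        rw [mul_comm]
        calc (⌊x i / s - t i⌋ + t i) * s ≤ (x i / s - t i + t i) * s := by nlinarith
          _ = x i := by field_simp; ring
      · have := Int.lt_floor_add_one (x i / s - t i)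
        have hxi : x i = (x i / s - t i + t i) * s := by field_simp; ring
        nlinarith
    · rintro c' ⟨hmem, hin⟩
      rw [mem_cube] at hin
      funext i
      obtain ⟨m', hm'⟩ := hmem i
      have hm2 : c' i = s * ((m':ℝ) + t i) := by
        rw [show ((c', k).1 i = 2 ^ (c', k).2 * (↑m' + (-1:ℝ) ^ (c', k).2 * ((v i : ℕ):ℝ) / 3)) = (c' i = s * ((m':ℝ) + t i)) from rfl] at hm'
        exact hm'
      have hb := hin i
      have hfl : ⌊x i / s - t i⌋ = m' := by
        rw [Int.floor_eq_iff]
        constructor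
        · have h1 := hb.1
          rw [hm2] at h1
          rw [le_sub_iff_add_le, le_div_iff₀ hs]
          nlinarith
        · have h2 := hb.2
          rw [hm2] at h2
          rw [sub_lt_iff_lt_add, div_lt_iff₀ hs]
          nlinarith
      rw [hm2, hfl]

lemma int_key (e j : ℤ) (he : e * e = 1) :
    3 * (e * ((e * j) / 3)) + e * ((e * j) % 3) = j := by
  have h1 := Int.mul_ediv_add_emod (e * j) 3
  linear_combination e * h1 + j * he

end OneThird

open OneThird in
/-- Theorem 2 of the paper; Okikiolu. There are `3^n` dyadic grids such
that every axis-parallel cube `Q` is contained in a cube `Q₀` of one of the grids with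
`ℓ(Q₀) ≤ 3 ℓ(Q)`. -/
theorem exists_dyadic_grids (n : ℕ) :
    ∃ D : Fin (3 ^ n) → DyadicGrid n,
      ∀ (c : Fin n → ℝ) (h : ℝ), 0 < h →
        ∃ (i : Fin (3 ^ n)) (c₀ : Fin n → ℝ) (k : ℤ),
          (c₀, k) ∈ (D i).cubes ∧ cube c h ⊆ cube c₀ ((2:ℝ) ^ k) ∧
            (2:ℝ) ^ k ≤ 3 * h := by
  refine ⟨fun i => grid n (finFunctionFinEquiv.symm i), ?_⟩
  intro c h hh
  have h3h : (0:ℝ) < 3 * h := by linarith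
  set k : ℤ := ⌊Real.logb 2 (3 * h)⌋ with hk
  set s : ℝ := (2:ℝ)^k with hs_def
  have hs : 0 < s := zpow_pos (by norm_num) k
  have hs1 : s ≤ 3 * h := by
    calc s = (2:ℝ) ^ ((k:ℝ)) := (Real.rpow_intCast 2 k).symm
      _ ≤ (2:ℝ) ^ (Real.logb 2 (3*h)) :=
          Real.rpow_le_rpow_of_exponent_le (by norm_num) (Int.floor_le _)
      _ = 3 * h := Real.rpow_logb (by norm_num) (by norm_num) h3h
  have hs2 : 3 * h < 2 * s := by
    have : (3:ℝ) * h < (2:ℝ) ^ ((k:ℝ) + 1) := by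
      calc (3:ℝ) * h = (2:ℝ) ^ (Real.logb 2 (3*h)) :=
            (Real.rpow_logb (by norm_num) (by norm_num) h3h).symm
        _ < (2:ℝ) ^ ((k:ℝ) + 1) :=
            Real.rpow_lt_rpow_of_exponent_lt (by norm_num) (Int.lt_floor_add_one _)
    have h2 : (2:ℝ) ^ ((k:ℝ) + 1) = 2 * s := by
      rw [show ((k:ℝ) + 1) = (((k+1 : ℤ)):ℝ) by push_cast; ring, Real.rpow_intCast,
        hs_def, zpow_add₀ (by norm_num : (2:ℝ) ≠ 0)]
      ring
    linarith [h2 ▸ this]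
  obtain ⟨e, he, he2⟩ := neg_one_zpow_eq k
  set j : Fin n → ℤ := fun i => ⌊3 * c i / s⌋ with hj
  set r : Fin n → ℤ := fun i => (e * j i) % 3 with hr
  have hr0 : ∀ i, 0 ≤ r i := fun i => Int.emod_nonneg _ (by norm_num)
  have hr3 : ∀ i, r i < 3 := fun i => Int.emod_lt_of_pos _ (by norm_num)
  set v : Fin n → Fin 3 := fun i => ⟨(r i).toNat, by have := hr0 i; have := hr3 i; omega⟩
  set m : Fin n → ℤ := fun i => e * ((e * j i) / 3) with hm
  set c₀ : Fin n → ℝ := fun i => s * ((m i : ℝ) + (-1:ℝ)^k * ((v i : ℕ):ℝ) / 3) with hc₀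
  have hvr : ∀ i, ((v i : ℕ):ℝ) = ((r i : ℤ):ℝ) := by
    intro i
    have := hr0 i
    simp only [v]
    exact_mod_cast Int.toNat_of_nonneg this
  have hc₀j : ∀ i, c₀ i = (s / 3) * (j i) := by
    intro i
    have hkey : (3:ℤ) * m i + e * r i = j i := int_key e (j i) he2
    have hkeyR : (3:ℝ) * (m i : ℝ) + (e:ℝ) * (r i : ℝ) = (j i : ℝ) := by exact_mod_cast hkey
    rw [hc₀]
    simp only
    rw [hvr i, he]
    linear_combination (s/3) * hkeyR
  refine ⟨finFunctionFinEquiv v, c₀, k, ?_, ?_, hs1⟩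
  · show ∀ i, ∃ mm : ℤ, c₀ i = (2:ℝ)^k * (mm + (-1:ℝ)^k * (((finFunctionFinEquiv.symm (finFunctionFinEquiv v)) i : ℕ):ℝ) / 3)
    intro i
    refine ⟨m i, ?_⟩
    rw [Equiv.symm_apply_apply]
  · apply cube_subset
    intro i
    have hfl1 : (j i : ℝ) ≤ 3 * c i / s := Int.floor_le _
    have hfl2 : 3 * c i / s < (j i : ℝ) + 1 := Int.lt_floor_add_one _
    have heq : (s/3) * (3 * c i / s) = c i := by field_simp
    have hb1 : (s/3) * (j i) ≤ c i := by
      have h' := mul_le_mul_of_nonneg_left hfl1 (le_of_lt (by positivity : (0:ℝ) < s/3))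
      linarith
    have hb2 : c i < (s/3) * ((j i) + 1) := by
      have h' := mul_lt_mul_of_pos_left hfl2 (by positivity : (0:ℝ) < s/3)
      linarith
    rw [hc₀j i]
    constructor
    · exact hb1
    · have : h < 2 * s / 3 := by linarith
      nlinarith

end
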